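/- Let ℝ^d = V ⊕ W be a decomposition into complementary linear subspaces with dim V = ℓ and dim W = d−ℓ. Let K ⊆ V and L ⊆ W be convex bodies (full-dimensional in V and W respectively) containing the origin, and let Λ ⊆ V and Γ ⊆ W be lattices (full-dimensional in V and W respectively). Then for every i ∈ {1,…,d}: μ_i(K ⊕ L, Λ ⊕ Γ) = max { μ_j(K, Λ) + μ_{i−j}(L, Γ) : 0 ≤ j ≤ ℓ and 0 ≤ i−j ≤ d−ℓ }. -/

import Mathlib

open scoped Pointwise

/-- The `i`-th covering minimum of a convex body `K` with respect to a lattice,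
given as a set `L`, inside the ambient space `E`. -/
noncomputable def covMin {E : Type*} [AddCommGroup E] [Module ℝ E]
    (i : ℕ) (K L : Set E) : ℝ :=
  sInf {μ : ℝ | 0 ≤ μ ∧ ∀ U : AffineSubspace ℝ E, (U : Set E).Nonempty →
    Module.finrank ℝ U.direction = Module.finrank ℝ E - i →
    ((μ • K + L) ∩ (U : Set E)).Nonempty}


open Module Set Pointwise

def covSet {E : Type*} [AddCommGroup E] [Module ℝ E]
    (i : ℕ) (K L : Set E) : Set ℝ :=
  {μ : ℝ | 0 ≤ μ ∧ ∀ U : AffineSubspace ℝ E, (U : Set E).Nonempty →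
    Module.finrank ℝ U.direction = Module.finrank ℝ E - i →
    ((μ • K + L) ∩ (U : Set E)).Nonempty}

theorem covMin_def {E : Type*} [AddCommGroup E] [Module ℝ E] (i : ℕ) (K L : Set E) :
    covMin i K L = sInf (covSet i K L) := rfl

section Basic
variable {E : Type*} [AddCommGroup E] [Module ℝ E]

/-- star-shapedness: smaller nonneg dilates are contained in larger ones. -/
theorem smul_subset_smul_of_star {K : Set E} (hK : Convex ℝ K) (h0 : (0:E) ∈ K)
    {s t : ℝ} (hs : 0 ≤ s) (hst : s ≤ t) : s • K ⊆ t • K := by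
  rcases eq_or_lt_of_le (hs.trans hst) with ht | ht
  · have : s = 0 := le_antisymm (hst.trans ht.symm.le) hs
    simp [this, ← ht]
  · rintro x ⟨y, hy, rfl⟩
    refine ⟨(s / t) • y, hK.smul_mem_of_zero_mem h0 hy ⟨by positivity, ?_⟩, ?_⟩
    · exact div_le_one_of_le₀ hst ht.le
    · show t • (s / t) • y = s • y
      rw [smul_smul, mul_div_cancel₀ _ ht.ne']

theorem covSet_bddBelow (i : ℕ) (K L : Set E) : BddBelow (covSet i K L) :=
  ⟨0, fun _ hx => hx.1⟩

theorem covMin_nonneg (i : ℕ) (K L : Set E) : 0 ≤ covMin i K L :=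
  Real.sInf_nonneg fun _ hx => hx.1

theorem covSet_up_closed {K L : Set E} (hK : Convex ℝ K) (h0 : (0:E) ∈ K) {i : ℕ}
    {μ μ' : ℝ} (hμ : μ ∈ covSet i K L) (h : μ ≤ μ') : μ' ∈ covSet i K L := by
  refine ⟨hμ.1.trans h, fun U hU hdim => ?_⟩
  obtain ⟨z, ⟨w, hw, l, hl, rfl⟩, hzU⟩ := hμ.2 U hU hdim
  exact ⟨w + l, ⟨w, smul_subset_smul_of_star hK h0 hμ.1 h hw, l, hl, rfl⟩, hzU⟩

/-- witness for values below the covering minimum -/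
theorem exists_witness {K L : Set E} {i : ℕ} {μ : ℝ} (h0 : 0 ≤ μ)
    (h : μ < covMin i K L) :
    ∃ U : AffineSubspace ℝ E, (U : Set E).Nonempty ∧
      Module.finrank ℝ U.direction = Module.finrank ℝ E - i ∧
      (μ • K + L) ∩ (U : Set E) = ∅ := by
  have hμ : μ ∉ covSet i K L := fun hmem =>
    absurd (csInf_le (covSet_bddBelow i K L) hmem) (not_le.mpr h)
  simp only [covSet, Set.mem_setOf_eq, not_and, not_forall] at hμ
  obtain ⟨U, hU, hdim, hint⟩ := hμ h0
  exact ⟨U, hU, hdim, Set.not_nonempty_iff_eq_empty.mp hint⟩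

end Basic

section ExistsAff
variable {E : Type*} [AddCommGroup E] [Module ℝ E] [FiniteDimensional ℝ E]

/-- existence of an affine subspace with direction of a given finrank `k ≤ finrank E`. -/
theorem exists_affine_of_finrank {k : ℕ} (hk : k ≤ finrank ℝ E) :
    ∃ U : AffineSubspace ℝ E, (U : Set E).Nonempty ∧
      Module.finrank ℝ U.direction = k := by
  obtain ⟨D, hD⟩ : ∃ D : Submodule ℝ E, finrank ℝ D = k := by
    let b := Module.finBasis ℝ E
    refine ⟨Submodule.span ℝ (Set.range (b ∘ Fin.castLE hk)), ?_⟩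
    rw [finrank_span_eq_card (b.linearIndependent.comp _ (Fin.castLE_injective hk))]
    simp
  exact ⟨AffineSubspace.mk' 0 D, ⟨0, AffineSubspace.self_mem_mk' 0 D⟩,
    by rw [AffineSubspace.direction_mk']; exact hD⟩

end ExistsAff

section Cover
variable {E : Type*} [NormedAddCommGroup E] [NormedSpace ℝ E] [FiniteDimensional ℝ E]

theorem lattice_cover (Λ : Submodule ℤ E) (hfull : Submodule.span ℝ (Λ : Set E) = ⊤) :
    ∃ R : ℝ, 0 < R ∧ ∀ x : E, ∃ a ∈ Λ, ‖x - a‖ < R := by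
  obtain ⟨s, hsΛ, hspan, hindep⟩ := exists_linearIndependent ℝ (Λ : Set E)
  have hfin : s.Finite := hindep.setFinite
  haveI := hfin.fintype
  have hspan' : ⊤ ≤ Submodule.span ℝ (Set.range (fun x : s => (x : E))) := by
    rw [Subtype.range_coe]; rw [hspan, hfull]
  let b : Basis s ℝ E := Basis.mk hindep hspan'
  refine ⟨(∑ i : s, ‖(i : E)‖) + 1, by positivity, fun x => ?_⟩
  refine ⟨∑ i : s, (⌊b.repr x i⌋ : ℤ) • (i : E), ?_, ?_⟩
  · exact Submodule.sum_mem _ fun i _ => Submodule.smul_mem _ _ (hsΛ i.2)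
  · have hx : x = ∑ i : s, b.repr x i • (i : E) := by
      conv_lhs => rw [← b.sum_repr x]
      refine Finset.sum_congr rfl fun i _ => by rw [Basis.mk_apply]
    have : x - (∑ i : s, (⌊b.repr x i⌋ : ℤ) • (i : E))
        = ∑ i : s, Int.fract (b.repr x i) • (i : E) := by
      rw [sub_eq_iff_eq_add, ← Finset.sum_add_distrib]
      conv_lhs => rw [hx]
      refine Finset.sum_congr rfl fun i _ => ?_
      rw [Int.fract, ← Int.cast_smul_eq_zsmul ℝ, ← add_smul, sub_add_cancel]
    rw [this]
    calc ‖∑ i : s, Int.fract (b.repr x i) • (i : E)‖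
        ≤ ∑ i : s, ‖Int.fract (b.repr x i) • (i : E)‖ := norm_sum_le _ _
      _ ≤ ∑ i : s, ‖(i : E)‖ := by
          refine Finset.sum_le_sum fun i _ => ?_
          rw [norm_smul, Real.norm_eq_abs,
            abs_of_nonneg (Int.fract_nonneg _)]
          exact mul_le_of_le_one_left (norm_nonneg _) (Int.fract_lt_one _).le
      _ < _ := lt_add_one _

theorem smul_K_add_lattice_eq_univ (Λ : Submodule ℤ E)
    (hfull : Submodule.span ℝ (Λ : Set E) = ⊤) {K : Set E} {c : E}
    (hc : c ∈ interior K) :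
    ∃ μ₀ : ℝ, 0 < μ₀ ∧ ∀ μ : ℝ, μ₀ ≤ μ → μ • K + (Λ : Set E) = Set.univ := by
  obtain ⟨R, hR, hcov⟩ := lattice_cover Λ hfull
  obtain ⟨ε, hε, hball⟩ := Metric.mem_nhds_iff.mp (mem_interior_iff_mem_nhds.mp hc)
  refine ⟨R / ε, by positivity, fun μ hμ => ?_⟩
  have hμ0 : 0 < μ := lt_of_lt_of_le (by positivity) hμ
  ext x
  simp only [Set.mem_univ, iff_true]
  obtain ⟨a, haΛ, ha⟩ := hcov (x - μ • c)
  refine ⟨x - a, ⟨μ⁻¹ • (x - a), hball ?_, by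
    show μ • μ⁻¹ • (x - a) = x - a
    rw [smul_smul, mul_inv_cancel₀ hμ0.ne', one_smul]⟩, a, haΛ, sub_add_cancel x a⟩
  rw [Metric.mem_ball, dist_eq_norm]
  have : μ⁻¹ • (x - a) - c = μ⁻¹ • (x - μ • c - a) := by
    rw [smul_sub, smul_sub, smul_sub, smul_smul, inv_mul_cancel₀ hμ0.ne', one_smul]
    abel
  rw [this, norm_smul, Real.norm_eq_abs, abs_of_pos (by positivity)]
  calc μ⁻¹ * ‖x - μ • c - a‖ < μ⁻¹ * R := by
        exact mul_lt_mul_of_pos_left ha (by positivity)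
    _ ≤ ε := by
        rw [inv_mul_le_iff₀ hμ0]
        calc R = (R / ε) * ε := by field_simp
          _ ≤ μ * ε := mul_le_mul_of_nonneg_right hμ hε.le
        
end Cover

section Sum
variable {E : Type*} [AddCommGroup E] [Module ℝ E]
  (V W : Submodule ℝ E)

/-- the direct sum of two affine subspaces of complementary subspaces -/
noncomputable def sumAff (UV : AffineSubspace ℝ V) (UW : AffineSubspace ℝ W)
    (pV : V) (pW : W) : AffineSubspace ℝ E :=
  AffineSubspace.mk' ((pV : E) + (pW : E))
    (UV.direction.map V.subtype ⊔ UW.direction.map W.subtype)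

theorem sumAff_nonempty (UV : AffineSubspace ℝ V) (UW : AffineSubspace ℝ W)
    (pV : V) (pW : W) : ((sumAff V W UV UW pV pW : AffineSubspace ℝ E) : Set E).Nonempty :=
  ⟨_, AffineSubspace.self_mem_mk' _ _⟩

theorem sumAff_finrank [FiniteDimensional ℝ E] (hVW : IsCompl V W) (UV : AffineSubspace ℝ V)
    (UW : AffineSubspace ℝ W) (pV : V) (pW : W) :
    finrank ℝ (sumAff V W UV UW pV pW).direction
      = finrank ℝ UV.direction + finrank ℝ UW.direction := by
  rw [sumAff, AffineSubspace.direction_mk']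
  have hbot : UV.direction.map V.subtype ⊓ UW.direction.map W.subtype = ⊥ := by
    rw [← le_bot_iff, ← disjoint_iff.mp hVW.disjoint]
    exact inf_le_inf (Submodule.map_subtype_le _ _) (Submodule.map_subtype_le _ _)
  have := Submodule.finrank_sup_add_finrank_inf_eq
    (UV.direction.map V.subtype) (UW.direction.map W.subtype)
  rw [hbot, finrank_bot, add_zero, Submodule.finrank_map_subtype_eq,
    Submodule.finrank_map_subtype_eq] at this
  exact this

theorem mem_sumAff (hVW : IsCompl V W) {UV : AffineSubspace ℝ V} {UW : AffineSubspace ℝ W}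
    {pV : V} {pW : W} (hpV : pV ∈ UV) (hpW : pW ∈ UW) {z : E} :
    z ∈ sumAff V W UV UW pV pW ↔
      V.projectionOnto W hVW z ∈ UV ∧ W.projectionOnto V hVW.symm z ∈ UW := by
  set πV := V.projectionOnto W hVW
  set πW := W.projectionOnto V hVW.symm
  rw [sumAff, AffineSubspace.mem_mk']
  constructor
  · intro h
    obtain ⟨y, hy, w, hw, hyw⟩ := Submodule.mem_sup.mp h
    obtain ⟨y', hy', rfl⟩ := Submodule.mem_map.mp hy
    obtain ⟨w', hw', rfl⟩ := Submodule.mem_map.mp hw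
    have hz : z = ((pV : E) + (pW : E)) + ((y' : E) + (w' : E)) := by
      show z = ((pV : E) + (pW : E)) + (V.subtype y' + W.subtype w')
      rw [hyw, vsub_eq_sub]; abel
    constructor
    · have : πV z = y' + pV := by
        rw [hz]
        simp only [map_add, πV]
        rw [Submodule.projectionOnto_apply_left hVW pV,
          Submodule.projectionOnto_apply_of_mem_right hVW pW.2,
          Submodule.projectionOnto_apply_left hVW y',
          Submodule.projectionOnto_apply_of_mem_right hVW (Submodule.coe_mem w')]
        abel
      rw [this]
      exact AffineSubspace.vadd_mem_of_mem_direction hy' hpV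
    · have : πW z = w' + pW := by
        rw [hz]
        simp only [map_add, πW]
        rw [Submodule.projectionOnto_apply_left hVW.symm pW,
          Submodule.projectionOnto_apply_of_mem_right hVW.symm pV.2,
          Submodule.projectionOnto_apply_left hVW.symm w',
          Submodule.projectionOnto_apply_of_mem_right hVW.symm (Submodule.coe_mem y')]
        abel
      rw [this]
      exact AffineSubspace.vadd_mem_of_mem_direction hw' hpW
  · rintro ⟨hV, hW⟩
    have hz : z -ᵥ ((pV : E) + (pW : E))
        = ((πV z - pV : V) : E) + ((πW z - pW : W) : E) := by
      have hsum : ((πV z : E)) + ((πW z : E)) = z :=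
        Submodule.projection_add_projection_eq_self hVW z
      push_cast
      conv_lhs => rw [vsub_eq_sub, ← hsum]
      abel
    rw [hz]
    exact Submodule.mem_sup.mpr ⟨_, Submodule.mem_map_of_mem
      (AffineSubspace.vsub_mem_direction hV hpV), _, Submodule.mem_map_of_mem
      (AffineSubspace.vsub_mem_direction hW hpW), rfl⟩

end Sum
/-- A convex body: a compact convex set with nonempty interior (full-dimensional). -/
def IsConvexBody {E : Type*} [AddCommGroup E] [Module ℝ E] [TopologicalSpace E]
    (K : Set E) : Prop :=
  Convex ℝ K ∧ IsCompact K ∧ (interior K).Nonempty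

set_option maxHeartbeats 2000000 in
/-- **Theorem (covering minima of direct sums).** If `ℝ^d = V ⊕ W` with `dim V = ℓ`,
`K ⊆ V`, `L ⊆ W` are convex bodies containing the origin and `Λ ⊆ V`, `Γ ⊆ W` lattices, then
`μ_i(K ⊕ L, Λ ⊕ Γ) = max { μ_j(K,Λ) + μ_{i-j}(L,Γ) : 0 ≤ j ≤ ℓ, 0 ≤ i-j ≤ d-ℓ }`,
where `K ⊕ L = {t • x + (1-t) • y : x ∈ K, y ∈ L, t ∈ [0,1]}` and
`Λ ⊕ Γ = {a + b : a ∈ Λ, b ∈ Γ}`. -/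
theorem covMin_directSum
    (d ℓ i : ℕ) (hi : 1 ≤ i) (hid : i ≤ d)
    (V W : Submodule ℝ (Fin d → ℝ)) (hVW : IsCompl V W)
    (hVdim : Module.finrank ℝ V = ℓ) (hWdim : Module.finrank ℝ W = d - ℓ)
    (K : Set V) (L : Set W) (hK : IsConvexBody K) (hL : IsConvexBody L)
    (h0K : 0 ∈ K) (h0L : 0 ∈ L)
    (Λ : Submodule ℤ V) (hΛdisc : DiscreteTopology Λ)
    (hΛfull : Submodule.span ℝ (Λ : Set V) = ⊤)
    (Γ : Submodule ℤ W) (hΓdisc : DiscreteTopology Γ)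
    (hΓfull : Submodule.span ℝ (Γ : Set W) = ⊤) :
    covMin i
        {z : Fin d → ℝ | ∃ x ∈ K, ∃ y ∈ L, ∃ t : ℝ, t ∈ Set.Icc (0 : ℝ) 1 ∧
          z = t • (x : Fin d → ℝ) + (1 - t) • (y : Fin d → ℝ)}
        {z : Fin d → ℝ | ∃ a ∈ Λ, ∃ b ∈ Γ, z = ((a : V) : Fin d → ℝ) + ((b : W) : Fin d → ℝ)} =
      sSup {x : ℝ | ∃ j : ℕ, j ≤ ℓ ∧ j ≤ i ∧ i - j ≤ d - ℓ ∧
        x = covMin j K (Λ : Set V) + covMin (i - j) L (Γ : Set W)} := by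
  set KL : Set (Fin d → ℝ) := {z : Fin d → ℝ | ∃ x ∈ K, ∃ y ∈ L, ∃ t : ℝ, t ∈ Set.Icc (0 : ℝ) 1 ∧
          z = t • (x : Fin d → ℝ) + (1 - t) • (y : Fin d → ℝ)} with hKLdef
  set ΛΓ : Set (Fin d → ℝ) := {z : Fin d → ℝ | ∃ a ∈ Λ, ∃ b ∈ Γ,
          z = ((a : V) : Fin d → ℝ) + ((b : W) : Fin d → ℝ)} with hΛΓdef
  set Mset : Set ℝ := {x : ℝ | ∃ j : ℕ, j ≤ ℓ ∧ j ≤ i ∧ i - j ≤ d - ℓ ∧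
        x = covMin j K (Λ : Set V) + covMin (i - j) L (Γ : Set W)} with hMsetdef
  set M : ℝ := sSup Mset with hMdef
  have hE : finrank ℝ (Fin d → ℝ) = d := by
    simp [Module.finrank_fintype_fun_eq_card]
  have hℓd : ℓ ≤ d := by
    have h := V.finrank_le
    rw [hVdim, hE] at h
    exact h
  set πV : (Fin d → ℝ) →ₗ[ℝ] V := V.projectionOnto W hVW with hπV
  set πW : (Fin d → ℝ) →ₗ[ℝ] W := W.projectionOnto V hVW.symm with hπW
  have pVx : ∀ v : V, πV ↑v = v := fun v => Submodule.projectionOnto_apply_left hVW v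
  have pVw : ∀ w : W, πV ↑w = 0 := fun w =>
    Submodule.projectionOnto_apply_of_mem_right hVW w.2
  have pWw : ∀ w : W, πW ↑w = w := fun w =>
    Submodule.projectionOnto_apply_left hVW.symm w
  have pWv : ∀ v : V, πW ↑v = 0 := fun v =>
    Submodule.projectionOnto_apply_of_mem_right hVW.symm v.2
  -- nonemptiness and boundedness of the right-hand side set
  have hMne : Mset.Nonempty := by
    refine ⟨_, ⟨i - (d - ℓ), by omega, by omega, by omega, rfl⟩⟩
  have hMbdd : BddAbove Mset := by
    refine Set.Finite.bddAbove (Set.Finite.subset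
      (Set.Finite.image (fun j => covMin j K (Λ : Set V) + covMin (i - j) L (Γ : Set W))
        (Set.finite_Iic i)) ?_)
    rintro x ⟨j, h1, h2, h3, rfl⟩
    exact ⟨j, h2, rfl⟩
  have hMmem : ∀ j : ℕ, j ≤ ℓ → j ≤ i → i - j ≤ d - ℓ →
      covMin j K (Λ : Set V) + covMin (i - j) L (Γ : Set W) ≤ M :=
    fun j h1 h2 h3 => le_csSup hMbdd ⟨j, h1, h2, h3, rfl⟩
  have hM0 : 0 ≤ M := by
    obtain ⟨x, j, h1, h2, h3, hx⟩ := hMne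
    have : 0 ≤ x := hx ▸ add_nonneg (covMin_nonneg _ _ _) (covMin_nonneg _ _ _)
    exact this.trans (le_csSup hMbdd ⟨j, h1, h2, h3, hx⟩)
  -- nonemptiness of all the covering sets
  have hVcov : ∀ j : ℕ, ∃ μ₀ : ℝ, 0 < μ₀ ∧ ∀ μ, μ₀ ≤ μ → μ ∈ covSet j K (Λ : Set V) := by
    intro j
    obtain ⟨c, hc⟩ := hK.2.2
    obtain ⟨μ₀, hμ₀, hcov⟩ := smul_K_add_lattice_eq_univ Λ hΛfull hc
    refine ⟨μ₀, hμ₀, fun μ hμ => ⟨hμ₀.le.trans hμ, fun U hU hdim => ?_⟩⟩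
    rw [hcov μ hμ, Set.univ_inter]
    exact hU
  have hWcov : ∀ j : ℕ, ∃ μ₀ : ℝ, 0 < μ₀ ∧ ∀ μ, μ₀ ≤ μ → μ ∈ covSet j L (Γ : Set W) := by
    intro j
    obtain ⟨c, hc⟩ := hL.2.2
    obtain ⟨μ₀, hμ₀, hcov⟩ := smul_K_add_lattice_eq_univ Γ hΓfull hc
    refine ⟨μ₀, hμ₀, fun μ hμ => ⟨hμ₀.le.trans hμ, fun U hU hdim => ?_⟩⟩
    rw [hcov μ hμ, Set.univ_inter]
    exact hU
  have hVne : ∀ j : ℕ, (covSet j K (Λ : Set V)).Nonempty := by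
    intro j; obtain ⟨μ₀, h1, h2⟩ := hVcov j; exact ⟨μ₀, h2 μ₀ le_rfl⟩
  have hWne : ∀ j : ℕ, (covSet j L (Γ : Set W)).Nonempty := by
    intro j; obtain ⟨μ₀, h1, h2⟩ := hWcov j; exact ⟨μ₀, h2 μ₀ le_rfl⟩
  -- decomposing points of `μ • KL + ΛΓ` into components
  have comp_mem : ∀ (μ : ℝ) (z : Fin d → ℝ), z ∈ μ • KL + ΛΓ →
      ∃ t : ℝ, t ∈ Set.Icc (0:ℝ) 1 ∧ ∃ x ∈ K, ∃ y ∈ L, ∃ a ∈ Λ, ∃ b ∈ Γ,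
        πV z = (μ * t) • x + a ∧ πW z = (μ * (1 - t)) • y + b := by
    intro μ z hz
    obtain ⟨w, hw, l, hl, hwl⟩ := Set.mem_add.mp hz
    obtain ⟨z₀, hz₀, hwz⟩ := Set.mem_smul_set.mp hw
    obtain ⟨x, hx, y, hy, t, ht, hz₀eq⟩ := hz₀
    obtain ⟨a, ha, b, hb, hleq⟩ := hl
    refine ⟨t, ht, x, hx, y, hy, a, ha, b, hb, ?_, ?_⟩
    · subst hwl hwz hz₀eq hleq
      simp [map_add, map_smul, pVx, pVw, smul_smul]
    · subst hwl hwz hz₀eq hleq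
      simp [map_add, map_smul, pWw, pWv, smul_smul]
  -- building points of `μ • KL + ΛΓ` from components
  have mem_comp : ∀ (μ μ₁ μ₂ : ℝ), 0 < μ → 0 ≤ μ₁ → 0 ≤ μ₂ → μ₁ + μ₂ = μ →
      ∀ x ∈ K, ∀ y ∈ L, ∀ a ∈ Λ, ∀ b ∈ Γ,
        (μ₁ • (x : Fin d → ℝ) + (a : Fin d → ℝ)) + (μ₂ • (y : Fin d → ℝ) + (b : Fin d → ℝ)) ∈ μ • KL + ΛΓ := by
    intro μ μ₁ μ₂ hμ hμ₁ hμ₂ hsum x hx y hy a ha b hb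
    refine Set.mem_add.mpr ⟨μ₁ • (x : Fin d → ℝ) + μ₂ • (y : Fin d → ℝ),
      Set.mem_smul_set.mpr ⟨(μ₁/μ) • (x : Fin d → ℝ) + (1 - μ₁/μ) • (y : Fin d → ℝ),
        ⟨x, hx, y, hy, μ₁/μ, ⟨by positivity, by
          rw [div_le_one hμ]; linarith⟩, rfl⟩, ?_⟩,
      (a : Fin d → ℝ) + (b : Fin d → ℝ), ⟨a, ha, b, hb, rfl⟩, by abel⟩
    rw [smul_add, smul_smul, smul_smul, mul_div_cancel₀ _ hμ.ne']
    congr 1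
    rw [mul_sub, mul_one, mul_div_cancel₀ _ hμ.ne']
    congr 1
    linarith
  -- Part B : every element of the covering set dominates each `μ_j + μ_{i-j}`
  have partB : ∀ μ ∈ covSet i KL ΛΓ, ∀ j : ℕ, j ≤ ℓ → j ≤ i → i - j ≤ d - ℓ →
      covMin j K (Λ : Set V) + covMin (i - j) L (Γ : Set W) ≤ μ := by
    intro μ hμ j h1 h2 h3
    by_contra hlt
    push_neg at hlt
    set c1 := covMin j K (Λ : Set V)
    set c2 := covMin (i - j) L (Γ : Set W)
    -- we find `μ₁, μ₂ ≥ 0` summing to at least `μ` together with witnessing subspaces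
    -- in three cases
    have key : ∃ (UV : AffineSubspace ℝ V) (UW : AffineSubspace ℝ W),
        (UV : Set V).Nonempty ∧ (UW : Set W).Nonempty ∧
        finrank ℝ UV.direction = finrank ℝ V - j ∧
        finrank ℝ UW.direction = finrank ℝ W - (i - j) ∧
        ∀ t ∈ Set.Icc (0:ℝ) 1, ∀ x ∈ K, ∀ y ∈ L, ∀ a ∈ Λ, ∀ b ∈ Γ,
          ((μ * t) • x + a ∉ UV) ∨ ((μ * (1 - t)) • y + b ∉ UW) := by
      rcases lt_or_ge μ c1 with hc1 | hc1
      · obtain ⟨UV, hUVne, hUVdim, hUVdisj⟩ := exists_witness hμ.1 hc1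
        obtain ⟨UW, hUWne, hUWdim⟩ :=
          exists_affine_of_finrank (E := W) (Nat.sub_le (finrank ℝ W) (i - j))
        refine ⟨UV, UW, hUVne, hUWne, hUVdim, hUWdim, fun t ht x hx y hy a ha b hb => ?_⟩
        left
        intro hmem
        refine Set.eq_empty_iff_forall_notMem.mp hUVdisj ((μ * t) • x + a) ⟨?_, hmem⟩
        refine Set.mem_add.mpr ⟨(μ * t) • x, ?_, a, ha, rfl⟩
        refine smul_subset_smul_of_star hK.1 h0K (mul_nonneg hμ.1 ht.1)
          (mul_le_of_le_one_right hμ.1 ht.2) (Set.smul_mem_smul_set hx)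
      rcases lt_or_ge μ c2 with hc2 | hc2
      · obtain ⟨UW, hUWne, hUWdim, hUWdisj⟩ := exists_witness hμ.1 hc2
        obtain ⟨UV, hUVne, hUVdim⟩ :=
          exists_affine_of_finrank (E := V) (Nat.sub_le (finrank ℝ V) j)
        refine ⟨UV, UW, hUVne, hUWne, hUVdim, hUWdim, fun t ht x hx y hy a ha b hb => ?_⟩
        right
        intro hmem
        refine Set.eq_empty_iff_forall_notMem.mp hUWdisj ((μ * (1 - t)) • y + b) ⟨?_, hmem⟩
        refine Set.mem_add.mpr ⟨(μ * (1 - t)) • y, ?_, b, hb, rfl⟩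
        refine smul_subset_smul_of_star hL.1 h0L (mul_nonneg hμ.1 (by linarith [ht.2]))
          (mul_le_of_le_one_right hμ.1 (by linarith [ht.1])) (Set.smul_mem_smul_set hy)
      · obtain ⟨μ₁, hμ₁l, hμ₁r⟩ := exists_between (show μ - c2 < c1 by linarith)
        have hμ₁0 : 0 ≤ μ₁ := le_of_lt (lt_of_le_of_lt (by linarith) hμ₁l)
        have hμ₂0 : 0 ≤ μ - μ₁ := by
          have : c1 ≤ μ := hc1
          linarith
        obtain ⟨UV, hUVne, hUVdim, hUVdisj⟩ := exists_witness hμ₁0 hμ₁r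
        obtain ⟨UW, hUWne, hUWdim, hUWdisj⟩ :=
          exists_witness hμ₂0 (show μ - μ₁ < c2 by linarith)
        refine ⟨UV, UW, hUVne, hUWne, hUVdim, hUWdim, fun t ht x hx y hy a ha b hb => ?_⟩
        rcases le_or_gt (μ * t) μ₁ with hcase | hcase
        · left
          intro hmem
          refine Set.eq_empty_iff_forall_notMem.mp hUVdisj ((μ * t) • x + a) ⟨?_, hmem⟩
          refine Set.mem_add.mpr ⟨(μ * t) • x, ?_, a, ha, rfl⟩
          exact smul_subset_smul_of_star hK.1 h0K (mul_nonneg hμ.1 ht.1) hcase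
            (Set.smul_mem_smul_set hx)
        · right
          intro hmem
          refine Set.eq_empty_iff_forall_notMem.mp hUWdisj ((μ * (1 - t)) • y + b) ⟨?_, hmem⟩
          refine Set.mem_add.mpr ⟨(μ * (1 - t)) • y, ?_, b, hb, rfl⟩
          refine smul_subset_smul_of_star hL.1 h0L (mul_nonneg hμ.1 (by linarith [ht.2])) ?_
            (Set.smul_mem_smul_set hy)
          have hexp : μ * (1 - t) = μ - μ * t := by ring
          rw [hexp]
          linarith [hcase]
    obtain ⟨UV, UW, hUVne, hUWne, hUVdim, hUWdim, hbad⟩ := key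
    obtain ⟨pV, hpV⟩ := hUVne
    obtain ⟨pW, hpW⟩ := hUWne
    have hsumne := sumAff_nonempty V W UV UW pV pW
    have hsumdim : finrank ℝ (sumAff V W UV UW pV pW).direction = finrank ℝ (Fin d → ℝ) - i := by
      rw [sumAff_finrank V W hVW UV UW pV pW, hUVdim, hUWdim, hVdim, hWdim, hE]
      omega
    obtain ⟨z, hzmem, hzU⟩ := hμ.2 _ hsumne hsumdim
    obtain ⟨t, ht, x, hx, y, hy, a, ha, b, hb, hzV, hzW⟩ := comp_mem μ z hzmem
    have := (mem_sumAff V W hVW hpV hpW).mp hzU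
    rcases hbad t ht x hx y hy a ha b hb with h | h
    · exact h (hzV ▸ this.1)
    · exact h (hzW ▸ this.2)
  -- Part A : every `μ > M` lies in the covering set
  have partA : ∀ μ : ℝ, M < μ → μ ∈ covSet i KL ΛΓ := by
    intro μ hMμ
    have hμpos : 0 < μ := lt_of_le_of_lt hM0 hMμ
    refine ⟨hμpos.le, fun U hUne hUdim => ?_⟩
    rw [hE] at hUdim
    -- dimension bookkeeping
    set jv := finrank ℝ (U.direction.map πV) with hjv
    set Dfib := U.direction.comap W.subtype with hDfib
    set kf := finrank ℝ Dfib with hkf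
    have hjk : jv + kf = d - i := by
      have hrn := LinearMap.finrank_range_add_finrank_ker (πV ∘ₗ U.direction.subtype)
      have hrange : LinearMap.range (πV ∘ₗ U.direction.subtype) = U.direction.map πV := by
        rw [LinearMap.range_comp, Submodule.range_subtype]
      have hker : LinearMap.ker (πV ∘ₗ U.direction.subtype)
          = Submodule.comap U.direction.subtype W := by
        rw [LinearMap.ker_comp, hπV, Submodule.ker_projectionOnto]
      have e1 : Submodule.comap U.direction.subtype W
          = Submodule.comap U.direction.subtype (W ⊓ U.direction) := by
        ext v
        simp only [Submodule.mem_comap, Submodule.mem_inf]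
        exact ⟨fun h => ⟨h, v.2⟩, fun h => h.1⟩
      have e2 : Dfib = Submodule.comap W.subtype (W ⊓ U.direction) := by
        ext v
        simp only [hDfib, Submodule.mem_comap, Submodule.mem_inf]
        exact ⟨fun h => ⟨v.2, h⟩, fun h => h.2⟩
      have f1 : finrank ℝ (Submodule.comap U.direction.subtype W)
          = finrank ℝ (W ⊓ U.direction : Submodule ℝ (Fin d → ℝ)) := by
        rw [e1]
        exact (Submodule.comapSubtypeEquivOfLe inf_le_right).finrank_eq
      have f2 : kf = finrank ℝ (W ⊓ U.direction : Submodule ℝ (Fin d → ℝ)) := by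
        rw [hkf, e2]
        exact (Submodule.comapSubtypeEquivOfLe inf_le_left).finrank_eq
      rw [hrange, hker, f1, hUdim] at hrn
      rw [f2]
      omega
    have hjvle : jv ≤ ℓ := by
      rw [← hVdim]; exact (U.direction.map πV).finrank_le
    have hkfle : kf ≤ d - ℓ := by
      rw [← hWdim]; exact Dfib.finrank_le
    set j := ℓ - jv with hj
    have hj1 : j ≤ ℓ := Nat.sub_le _ _
    have hj2 : j ≤ i := by omega
    have hj3 : i - j ≤ d - ℓ := by omega
    have hjvj : finrank ℝ V - j = jv := by rw [hVdim]; omega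
    have hkfj : finrank ℝ W - (i - j) = kf := by rw [hWdim]; omega
    -- choose `μ₁` and `μ₂`
    set c1 := covMin j K (Λ : Set V) with hc1
    set c2 := covMin (i - j) L (Γ : Set W) with hc2
    have hcM : c1 + c2 ≤ M := hMmem j hj1 hj2 hj3
    set δ := (μ - (c1 + c2)) / 2 with hδ
    have hδpos : 0 < δ := by
      rw [hδ]
      have := lt_of_le_of_lt hcM hMμ
      linarith
    obtain ⟨μ₁, hμ₁mem, hμ₁lt⟩ := (csInf_lt_iff (covSet_bddBelow j K (Λ : Set V))
      (hVne j)).mp (show sInf (covSet j K (Λ : Set V)) < c1 + δ by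
        rw [← covMin_def]; linarith)
    obtain ⟨μ₂', hμ₂'mem, hμ₂'lt⟩ := (csInf_lt_iff (covSet_bddBelow (i - j) L (Γ : Set W))
      (hWne (i - j))).mp (show sInf (covSet (i - j) L (Γ : Set W)) < c2 + δ by
        rw [← covMin_def]; linarith)
    set μ₂ := μ - μ₁ with hμ₂def
    have hμ₂'le : μ₂' ≤ μ₂ := by
      rw [hμ₂def]; linarith
    have hμ₂mem : μ₂ ∈ covSet (i - j) L (Γ : Set W) :=
      covSet_up_closed hL.1 h0L hμ₂'mem hμ₂'le
    have hμ₁0 : 0 ≤ μ₁ := hμ₁mem.1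
    have hμ₂0 : 0 ≤ μ₂ := hμ₂'mem.1.trans hμ₂'le
    -- the projected subspace in V
    set UVaff := U.map πV.toAffineMap with hUVaff
    have hUVne : (UVaff : Set V).Nonempty := by
      rw [hUVaff]
      exact hUne.image _
    have hUVdim : finrank ℝ UVaff.direction = finrank ℝ V - j := by
      rw [hUVaff, AffineSubspace.map_direction, hjvj]
      congr 1
    obtain ⟨p, hpmem, hpU⟩ := hμ₁mem.2 UVaff hUVne hUVdim
    obtain ⟨u, hu, hup⟩ := AffineSubspace.mem_map.mp hpU
    obtain ⟨xk, hxk, a, ha, hpeq⟩ := Set.mem_add.mp hpmem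
    obtain ⟨x, hx, hxke⟩ := Set.mem_smul_set.mp hxk
    -- the fiber subspace in W
    set Ufib := AffineSubspace.mk' (πW u) Dfib with hUfib
    have hUfibne : (Ufib : Set W).Nonempty := ⟨_, AffineSubspace.self_mem_mk' _ _⟩
    have hUfibdim : finrank ℝ Ufib.direction = finrank ℝ W - (i - j) := by
      rw [hUfib, AffineSubspace.direction_mk', hkfj]
    obtain ⟨q, hqmem, hqfib⟩ := hμ₂mem.2 Ufib hUfibne hUfibdim
    obtain ⟨yk, hyk, b, hb, hqeq⟩ := Set.mem_add.mp hqmem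
    obtain ⟨y, hy, hyke⟩ := Set.mem_smul_set.mp hyk
    -- assemble the point
    refine ⟨(p : Fin d → ℝ) + (q : Fin d → ℝ), ?_, ?_⟩
    · have : (p : Fin d → ℝ) + (q : Fin d → ℝ) = (μ₁ • (x : Fin d → ℝ) + (a : Fin d → ℝ)) + (μ₂ • (y : Fin d → ℝ) + (b : Fin d → ℝ)) := by
        rw [← hpeq, ← hqeq, ← hxke, ← hyke]
        push_cast
        ring_nf
      rw [this]
      exact mem_comp μ μ₁ μ₂ hμpos hμ₁0 hμ₂0 (by rw [hμ₂def]; ring) x hx y hy a ha b hb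
    · have hq' : ((q - πW u : W) : Fin d → ℝ) ∈ U.direction := by
        have h := AffineSubspace.mem_mk'.mp hqfib
        rw [vsub_eq_sub] at h
        exact Submodule.mem_comap.mp h
      have hztownship : (p : Fin d → ℝ) + (q : Fin d → ℝ)
          = ((q - πW u : W) : Fin d → ℝ) +ᵥ u := by
        have h1 : p = πV u := hup.symm
        have hsum : ((πV u : Fin d → ℝ)) + ((πW u : Fin d → ℝ)) = u :=
          Submodule.projection_add_projection_eq_self hVW u
        rw [vadd_eq_add, h1]
        push_cast
        calc ((πV u : Fin d → ℝ)) + (q : Fin d → ℝ)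
            = (q : Fin d → ℝ) - ((πW u : Fin d → ℝ))
              + (((πV u : Fin d → ℝ)) + ((πW u : Fin d → ℝ))) := by abel
          _ = (q : Fin d → ℝ) - ((πW u : Fin d → ℝ)) + u := by rw [hsum]
      rw [hztownship]
      exact AffineSubspace.vadd_mem_of_mem_direction hq' hu
  -- conclusion
  rw [covMin_def]
  apply le_antisymm
  · refine le_of_forall_pos_le_add fun ε hε => ?_
    exact csInf_le (covSet_bddBelow _ _ _) (partA (M + ε) (by linarith))
  · refine le_csInf ⟨M + 1, partA (M + 1) (by linarith)⟩ fun μ hμ => ?_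
    exact Real.sSup_le (fun x ⟨j, h1, h2, h3, hx⟩ => hx ▸ partB μ hμ j h1 h2 h3) hμ.1
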